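/- Let 0 < γ < 1, T ∈ (0, ∞], let E : ℝ → ℝ be convex and continuously differentiable, and let φ : [0, T) → ℝ be continuously differentiable. Then for every t ∈ (0, T), the Caputo derivative of E ∘ φ satisfies D_c^γ (E ∘ φ)(t) ≤ E′(φ(t)) · D_c^γ φ(t); that is, (1/Γ(1−γ)) ∫_0^t (t−s)^{−γ} E′(φ(s)) φ′(s) ds ≤ E′(φ(t)) · (1/Γ(1−γ)) ∫_0^t (t−s)^{−γ} φ′(s) ds. -/

import Mathlib

open MeasureTheory Set Filter
open scoped ENNReal Topology

/-- Integrability of the Caputo kernel times a continuous function. -/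
lemma caputo_integrable_kernel_mul (t γ : ℝ) (ht : 0 < t) (hγ1 : γ < 1) (g : ℝ → ℝ)
    (hg : ContinuousOn g (Icc 0 t)) :
    IntervalIntegrable (fun s => (t - s) ^ (-γ) * g s) volume 0 t := by
  have h1 : IntervalIntegrable (fun s : ℝ => s ^ (-γ)) volume 0 t :=
    intervalIntegral.intervalIntegrable_rpow' (by linarith)
  have h2 := (h1.comp_sub_left t).symm
  have h3 : IntervalIntegrable (fun x : ℝ => (t - x) ^ (-γ)) volume 0 t := by
    simpa using h2
  exact h3.mul_continuousOn (by rwa [uIcc_of_le ht.le])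

/-- Key inequality: if `F ≥ 0` on `[0,t]`, `F t = 0`, `F' t = 0`, then the singular
integral `∫ (t-s)^(-γ) F'(s)` is nonpositive. -/
lemma caputo_key (t γ : ℝ) (ht : 0 < t) (hγ0 : 0 < γ) (hγ1 : γ < 1)
    (F F' : ℝ → ℝ)
    (hF : ∀ s ∈ Icc (0:ℝ) t, HasDerivAt F (F' s) s)
    (hF' : ContinuousOn F' (Icc 0 t))
    (hFpos : ∀ s ∈ Icc (0:ℝ) t, 0 ≤ F s)
    (hFt : F t = 0) (hF't : F' t = 0) :
    ∫ s in (0:ℝ)..t, (t - s) ^ (-γ) * F' s ≤ 0 := by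
  have hint : IntervalIntegrable (fun s => (t - s) ^ (-γ) * F' s) volume 0 t :=
    caputo_integrable_kernel_mul t γ ht hγ1 F' hF'
  -- Step 1: bound on subintervals via integration by parts
  have hbound : ∀ x ∈ Ico (0:ℝ) t,
      (∫ s in (0:ℝ)..x, (t - s) ^ (-γ) * F' s) ≤ (t - x) ^ (-γ) * F x := by
    intro x hx
    obtain ⟨hx0, hxt⟩ := hx
    have hsub : Icc (0:ℝ) x ⊆ Icc 0 t := Icc_subset_Icc le_rfl hxt.le
    have hu : ∀ s ∈ uIcc (0:ℝ) x,
        HasDerivAt (fun s => (t - s) ^ (-γ)) (γ * (t - s) ^ (-γ - 1)) s := by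
      intro s hs
      rw [uIcc_of_le hx0] at hs
      have hts : 0 < t - s := by linarith [hs.2]
      have h1 : HasDerivAt (fun s : ℝ => t - s) (-1) s := by
        simpa using (hasDerivAt_id s).const_sub t
      have h2 := (Real.hasDerivAt_rpow_const (p := -γ) (Or.inl hts.ne')).comp s h1
      refine h2.congr_deriv ?_
      ring
    have hv : ∀ s ∈ uIcc (0:ℝ) x, HasDerivAt F (F' s) s := by
      intro s hs
      rw [uIcc_of_le hx0] at hs
      exact hF s (hsub hs)
    have hu'int : IntervalIntegrable (fun s => γ * (t - s) ^ (-γ - 1)) volume 0 x := by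
      apply ContinuousOn.intervalIntegrable
      rw [uIcc_of_le hx0]
      apply continuousOn_const.mul
      apply ContinuousOn.rpow_const (by fun_prop)
      intro s hs
      exact Or.inl (ne_of_gt (by linarith [hs.2]))
    have hv'int : IntervalIntegrable F' volume 0 x := by
      apply ContinuousOn.intervalIntegrable
      rw [uIcc_of_le hx0]
      exact hF'.mono hsub
    have hibp := intervalIntegral.integral_mul_deriv_eq_deriv_mul hu hv hu'int hv'int
    rw [hibp]
    have h00 : (0:ℝ) ≤ (t - 0) ^ (-γ) * F 0 :=
      mul_nonneg (Real.rpow_nonneg (by linarith) _) (hFpos 0 ⟨le_rfl, ht.le⟩)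
    have hI : (0:ℝ) ≤ ∫ s in (0:ℝ)..x, γ * (t - s) ^ (-γ - 1) * F s := by
      apply intervalIntegral.integral_nonneg hx0
      intro s hs
      have := hFpos s (hsub hs)
      have h2 : (0:ℝ) ≤ (t - s) ^ (-γ - 1) := Real.rpow_nonneg (by linarith [hs.2, hxt]) _
      positivity
    linarith
  -- Step 2: continuity of the primitive
  haveI : (𝓝[Ico (0:ℝ) t] t).NeBot := right_nhdsWithin_Ico_neBot ht
  have hlim1 : Tendsto (fun x => ∫ s in (0:ℝ)..x, (t - s) ^ (-γ) * F' s)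
      (𝓝[Ico 0 t] t) (𝓝 (∫ s in (0:ℝ)..t, (t - s) ^ (-γ) * F' s)) := by
    have hcont := intervalIntegral.continuousOn_primitive_interval' hint
      (left_mem_uIcc (a := (0:ℝ)) (b := t))
    rw [uIcc_of_le ht.le] at hcont
    exact (hcont t (right_mem_Icc.2 ht.le)).mono_left
      (nhdsWithin_mono _ Ico_subset_Icc_self)
  -- Step 3: the bound tends to 0
  have hlim2 : Tendsto (fun x => (t - x) ^ (-γ) * F x) (𝓝[Ico 0 t] t) (𝓝 0) := by
    have hslope : Tendsto (slope F t) (𝓝[≠] t) (𝓝 0) := by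
      have := hF t ⟨ht.le, le_rfl⟩
      rw [hF't] at this
      exact hasDerivAt_iff_tendsto_slope.mp this
    have h1 : Tendsto (fun x => slope F t x) (𝓝[Ico 0 t] t) (𝓝 0) :=
      hslope.mono_left (nhdsWithin_mono t fun x hx => ne_of_lt hx.2)
    have h2 : Tendsto (fun x => -((t - x) ^ (1 - γ))) (𝓝[Ico 0 t] t) (𝓝 0) := by
      have hc0 : ContinuousAt (fun y : ℝ => y ^ (1 - γ)) 0 :=
        Real.continuousAt_rpow_const 0 (1 - γ) (Or.inr (by linarith))
      have hsubt : Tendsto (fun x : ℝ => t - x) (𝓝 t) (𝓝 0) := by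
        have : Tendsto (fun x : ℝ => t - x) (𝓝 t) (𝓝 (t - t)) :=
          (continuous_const.sub continuous_id).tendsto t
        simpa using this
      have : Tendsto (fun x : ℝ => (t - x) ^ (1 - γ)) (𝓝 t) (𝓝 ((0:ℝ) ^ (1 - γ))) :=
        hc0.tendsto.comp hsubt
      rw [Real.zero_rpow (ne_of_gt (by linarith))] at this
      simpa using (this.mono_left nhdsWithin_le_nhds).neg
    have hmul := h1.mul h2
    rw [mul_zero] at hmul
    apply hmul.congr'
    filter_upwards [self_mem_nhdsWithin] with x hx
    have hxt : x < t := hx.2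
    have hpos : 0 < t - x := by linarith
    have hne : x - t ≠ 0 := by linarith
    have hsplit : (t - x) ^ (1 - γ) = (t - x) * (t - x) ^ (-γ) := by
      rw [show (1:ℝ) - γ = 1 + -γ by ring, Real.rpow_add hpos, Real.rpow_one]
    rw [slope_def_field, hFt, hsplit]
    field_simp
    ring
  -- Step 4: conclude
  exact le_of_tendsto_of_tendsto hlim1 hlim2
    (by filter_upwards [self_mem_nhdsWithin] with x hx using hbound x hx)

/-- Convexity inequality for Caputo derivatives: for `0 < γ < 1`, `T ∈ (0, ∞]`,
`E : ℝ → ℝ` convex and continuously differentiable (with derivative `E'`), and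
`φ` continuously differentiable on `[0, T)` (with derivative `φ'`), for every
`t ∈ (0,T)` the Caputo derivative of `E ∘ φ` satisfies
`D_c^γ (E∘φ)(t) ≤ E'(φ(t)) · D_c^γ φ(t)`. -/
theorem caputo_convexity_inequality
    (T : ℝ≥0∞) (hT : 0 < T) (γ : ℝ) (hγ0 : 0 < γ) (hγ1 : γ < 1)
    (E E' : ℝ → ℝ)
    (hconv : ConvexOn ℝ Set.univ E)
    (hE : ∀ x : ℝ, HasDerivAt E (E' x) x)
    (hE' : Continuous E')
    (φ φ' : ℝ → ℝ)
    (hderiv : ∀ t : ℝ, 0 ≤ t → ENNReal.ofReal t < T → HasDerivAt φ (φ' t) t)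
    (hcont : ContinuousOn φ' {t : ℝ | 0 ≤ t ∧ ENNReal.ofReal t < T}) :
    ∀ t : ℝ, 0 < t → ENNReal.ofReal t < T →
      (1 / Real.Gamma (1 - γ)) * ∫ s in (0:ℝ)..t, (t - s) ^ (-γ) * (E' (φ s) * φ' s) ≤
        E' (φ t) * ((1 / Real.Gamma (1 - γ)) * ∫ s in (0:ℝ)..t, (t - s) ^ (-γ) * φ' s) := by
  intro t ht htT
  have hΓ : 0 < Real.Gamma (1 - γ) := Real.Gamma_pos_of_pos (by linarith)
  set F : ℝ → ℝ := fun s => E (φ s) - E (φ t) - E' (φ t) * (φ s - φ t) with hFdef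
  set G : ℝ → ℝ := fun s => E' (φ s) * φ' s - E' (φ t) * φ' s with hGdef
  have hmemT : ∀ s ∈ Icc (0:ℝ) t, ENNReal.ofReal s < T := fun s hs =>
    lt_of_le_of_lt (ENNReal.ofReal_le_ofReal hs.2) htT
  have hφd : ∀ s ∈ Icc (0:ℝ) t, HasDerivAt φ (φ' s) s := fun s hs => hderiv s hs.1 (hmemT s hs)
  have hFd : ∀ s ∈ Icc (0:ℝ) t, HasDerivAt F (G s) s := by
    intro s hs
    have h1 : HasDerivAt (fun s => E (φ s)) (E' (φ s) * φ' s) s := (hE (φ s)).comp s (hφd s hs)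
    have h2 : HasDerivAt (fun s => E' (φ t) * (φ s - φ t)) (E' (φ t) * φ' s) s :=
      ((hφd s hs).sub_const (φ t)).const_mul (E' (φ t))
    exact (h1.sub_const (E (φ t))).sub h2
  have hφc : ContinuousOn φ (Icc 0 t) := fun s hs =>
    ((hφd s hs).continuousAt).continuousWithinAt
  have hφ'c : ContinuousOn φ' (Icc 0 t) := hcont.mono (fun s hs => ⟨hs.1, hmemT s hs⟩)
  have hGc : ContinuousOn G (Icc 0 t) :=
    ((hE'.comp_continuousOn hφc).mul hφ'c).sub (continuousOn_const.mul hφ'c)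
  have hFpos : ∀ s ∈ Icc (0:ℝ) t, 0 ≤ F s := by
    intro s hs
    rcases lt_trichotomy (φ s) (φ t) with h | h | h
    · have hsl := hconv.slope_le_of_hasDerivAt (mem_univ (φ s)) (mem_univ (φ t)) h (hE (φ t))
      rw [slope_def_field] at hsl
      have hd : 0 < φ t - φ s := by linarith
      rw [div_le_iff₀ hd] at hsl
      simp only [hFdef]
      nlinarith
    · simp [hFdef, h]
    · have hsl := hconv.le_slope_of_hasDerivAt (mem_univ (φ t)) (mem_univ (φ s)) h (hE (φ t))
      rw [slope_def_field] at hsl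
      have hd : 0 < φ s - φ t := by linarith
      rw [le_div_iff₀ hd] at hsl
      simp only [hFdef]
      nlinarith
  have hFt : F t = 0 := by simp [hFdef]
  have hGt : G t = 0 := by simp [hGdef]
  have key := caputo_key t γ ht hγ0 hγ1 F G hFd hGc hFpos hFt hGt
  have hint1 : IntervalIntegrable (fun s => (t - s) ^ (-γ) * (E' (φ s) * φ' s)) volume 0 t :=
    caputo_integrable_kernel_mul t γ ht hγ1 _ ((hE'.comp_continuousOn hφc).mul hφ'c)
  have hint2 : IntervalIntegrable (fun s => (t - s) ^ (-γ) * φ' s) volume 0 t :=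
    caputo_integrable_kernel_mul t γ ht hγ1 _ hφ'c
  have hint2' : IntervalIntegrable (fun s => E' (φ t) * ((t - s) ^ (-γ) * φ' s)) volume 0 t :=
    hint2.const_mul _
  have hsplit : (∫ s in (0:ℝ)..t, (t - s) ^ (-γ) * G s)
      = (∫ s in (0:ℝ)..t, (t - s) ^ (-γ) * (E' (φ s) * φ' s))
        - E' (φ t) * ∫ s in (0:ℝ)..t, (t - s) ^ (-γ) * φ' s := by
    rw [← intervalIntegral.integral_const_mul, ← intervalIntegral.integral_sub hint1 hint2']
    apply intervalIntegral.integral_congr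
    intro s _
    simp only [hGdef]
    ring
  have hmain : (∫ s in (0:ℝ)..t, (t - s) ^ (-γ) * (E' (φ s) * φ' s))
      ≤ E' (φ t) * ∫ s in (0:ℝ)..t, (t - s) ^ (-γ) * φ' s := by
    rw [hsplit] at key; linarith
  calc (1 / Real.Gamma (1 - γ)) * ∫ s in (0:ℝ)..t, (t - s) ^ (-γ) * (E' (φ s) * φ' s)
      ≤ (1 / Real.Gamma (1 - γ)) * (E' (φ t) * ∫ s in (0:ℝ)..t, (t - s) ^ (-γ) * φ' s) :=
        mul_le_mul_of_nonneg_left hmain (by positivity)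
    _ = E' (φ t) * ((1 / Real.Gamma (1 - γ)) * ∫ s in (0:ℝ)..t, (t - s) ^ (-γ) * φ' s) := by
        ring
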